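/- arXiv:2601.15272 — 3 statements merged into one kernel-verified Lean document; each statement's English description precedes it below -/
import Mathlib

section
/- Recursion for the deformed Lucasnomial power: for all x, y, u, v ∈ ℂ and n ∈ ℕ, if {m}_{s,t} ≠ 0 for all 1 ≤ m ≤ n+1, then (x ⊕_{u,v} y)^{(n+1)} = x·(ux ⊕_{u,v} φy)^{(n)} + y·(φ'x ⊕_{u,v} vy)^{(n)}, and also (x ⊕_{u,v} y)^{(n+1)} = x·(ux ⊕_{u,v} φ'y)^{(n)} + y·(φx ⊕_{u,v} vy)^{(n)}. -/
open scoped BigOperators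

noncomputable section

/-- The Lucas sequence `{n}_{s,t}`. -/
def lucasSeq (s t : ℂ) : ℕ → ℂ
  | 0 => 0
  | 1 => 1
  | n + 2 => s * lucasSeq s t (n + 1) + t * lucasSeq s t n

/-- The Lucastorial `{n}_{s,t}!`. -/
def lucasFact (s t : ℂ) : ℕ → ℂ
  | 0 => 1
  | n + 1 => lucasFact s t n * lucasSeq s t (n + 1)

/-- The Lucasnomial coefficient `{n choose k}_{s,t}`. -/
def lucasBinom (s t : ℂ) (n k : ℕ) : ℂ :=
  lucasFact s t n / (lucasFact s t k * lucasFact s t (n - k))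

/-- The `(u,v)`-deformed Lucasnomial power `(x ⊕_{u,v} y)^{(n)}`. -/
def lucasPow (s t u v x y : ℂ) (n : ℕ) : ℂ :=
  ∑ k ∈ Finset.range (n + 1),
    lucasBinom s t n k * u ^ ((n - k).choose 2) * v ^ (k.choose 2) * x ^ (n - k) * y ^ k

/-- The Lucas-derivative with respect to the roots `p = φ`, `q = φ'`. -/
def lucasDeriv (p q : ℂ) (f : ℂ → ℂ) (x : ℂ) : ℂ :=
  (f (p * x) - f (q * x)) / ((p - q) * x)

/-- The Lucas-derivative, extended by `0` at `0`, as an operator suitable for iteration. -/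
def lucasDeriv0 (p q : ℂ) (f : ℂ → ℂ) : ℂ → ℂ :=
  fun x => if x = 0 then 0 else (f (p * x) - f (q * x)) / ((p - q) * x)

/-- The Lucas-Pantograph exponential `exp_{s,t}(z,u)`. -/
def lucasExp (s t u z : ℂ) : ℂ :=
  ∑' n : ℕ, u ^ (n.choose 2) * z ^ n / lucasFact s t n

/-- The Lucas-Pantograph sine `sin_{s,t}(z,u)`. -/
def lucasSin (s t u z : ℂ) : ℂ :=
  ∑' n : ℕ, (-1 : ℂ) ^ n * u ^ ((2 * n + 1).choose 2) * z ^ (2 * n + 1) / lucasFact s t (2 * n + 1)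

/-- The Lucas-Pantograph cosine `cos_{s,t}(z,u)`. -/
def lucasCos (s t u z : ℂ) : ℂ :=
  ∑' n : ℕ, (-1 : ℂ) ^ n * u ^ ((2 * n).choose 2) * z ^ (2 * n) / lucasFact s t (2 * n)


private lemma lucasSeq_succ_root (s t p q : ℂ) (h1 : p + q = s) (h2 : p * q = -t) :
    ∀ b, lucasSeq s t (b + 1) = p * lucasSeq s t b + q ^ b := by
  have hs' : s = p + q := h1.symm
  have ht' : t = -(p * q) := by linear_combination h2
  subst hs' ht'
  intro b
  induction b using Nat.twoStepInduction with
  | zero => simp [lucasSeq]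
  | one => simp [lucasSeq]
  | more b ih1 ih2 =>
    have e : lucasSeq (p + q) (-(p * q)) (b + 2 + 1) =
        (p + q) * lucasSeq (p + q) (-(p * q)) (b + 2) +
          (-(p * q)) * lucasSeq (p + q) (-(p * q)) (b + 1) := rfl
    have ih2' : lucasSeq (p + q) (-(p * q)) (b + 2) =
        p * lucasSeq (p + q) (-(p * q)) (b + 1) + q ^ (b + 1) := ih2
    rw [e, ih2', ih1]
    ring

private lemma lucasSeq_add (s t p q : ℂ) (h1 : p + q = s) (h2 : p * q = -t) :
    ∀ a b, lucasSeq s t (a + b) = p ^ a * lucasSeq s t b + q ^ b * lucasSeq s t a := by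
  intro a
  induction a with
  | zero => intro b; simp [lucasSeq]
  | succ a ih =>
    intro b
    have : a + 1 + b = a + (b + 1) := by omega
    rw [this, ih (b + 1), lucasSeq_succ_root s t p q h1 h2 b,
        lucasSeq_succ_root s t q p (by linear_combination h1) (by linear_combination h2) a]
    ring

private lemma lucasFact_ne_zero (s t : ℂ) (N : ℕ)
    (hL : ∀ m, 1 ≤ m → m ≤ N → lucasSeq s t m ≠ 0) :
    ∀ m, m ≤ N → lucasFact s t m ≠ 0 := by
  intro m
  induction m with
  | zero => intro _; simp [lucasFact]
  | succ m ih =>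
    intro hm
    have e : lucasFact s t (m + 1) = lucasFact s t m * lucasSeq s t (m + 1) := rfl
    rw [e]
    exact mul_ne_zero (ih (by omega)) (hL (m + 1) (by omega) hm)

private lemma lucasBinom_zero (s t : ℂ) (m : ℕ) (h : lucasFact s t m ≠ 0) :
    lucasBinom s t m 0 = 1 := by
  simp [lucasBinom, lucasFact, div_self h]

private lemma lucasBinom_self (s t : ℂ) (m : ℕ) (h : lucasFact s t m ≠ 0) :
    lucasBinom s t m m = 1 := by
  simp [lucasBinom, lucasFact, div_self h]

private lemma choose_two_succ (m : ℕ) : (m + 1).choose 2 = m.choose 2 + m := by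
  rw [Nat.choose_succ_succ]
  simp [Nat.choose_one_right, Nat.add_comm]

private lemma lucasPascal (s t p q : ℂ) (h1 : p + q = s) (h2 : p * q = -t)
    (j m : ℕ) (hF : ∀ k, k ≤ j + m + 2 → lucasFact s t k ≠ 0) :
    lucasBinom s t (j + m + 2) (j + 1) =
      p ^ (j + 1) * lucasBinom s t (j + m + 1) (j + 1) +
        q ^ (m + 1) * lucasBinom s t (j + m + 1) j := by
  have hadd : lucasSeq s t (j + m + 2) =
      p ^ (j + 1) * lucasSeq s t (m + 1) + q ^ (m + 1) * lucasSeq s t (j + 1) := by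
    have := lucasSeq_add s t p q h1 h2 (j + 1) (m + 1)
    rwa [show j + 1 + (m + 1) = j + m + 2 from by omega] at this
  have e1 : lucasFact s t (j + m + 2) = lucasFact s t (j + m + 1) * lucasSeq s t (j + m + 2) := rfl
  have e2 : lucasFact s t (j + 1) = lucasFact s t j * lucasSeq s t (j + 1) := rfl
  have e3 : lucasFact s t (m + 1) = lucasFact s t m * lucasSeq s t (m + 1) := rfl
  have s1 : (j + m + 2) - (j + 1) = m + 1 := by omega
  have s2 : (j + m + 1) - (j + 1) = m := by omega
  have s3 : (j + m + 1) - j = m + 1 := by omega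
  unfold lucasBinom
  rw [s1, s2, s3, e1, e2, e3, hadd]
  have hFj : lucasFact s t j ≠ 0 := hF j (by omega)
  have hFm : lucasFact s t m ≠ 0 := hF m (by omega)
  have hLj : lucasSeq s t (j + 1) ≠ 0 := by
    intro h; exact hF (j + 1) (by omega) (by rw [e2, h]; ring)
  have hLm : lucasSeq s t (m + 1) ≠ 0 := by
    intro h; exact hF (m + 1) (by omega) (by rw [e3, h]; ring)
  field_simp

private lemma lucasPow_succ_root (s t p q : ℂ) (h1 : p + q = s) (h2 : p * q = -t)
    (x y u v : ℂ) (n : ℕ) (hF : ∀ k, k ≤ n + 1 → lucasFact s t k ≠ 0) :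
    lucasPow s t u v x y (n + 1) =
      x * lucasPow s t u v (u * x) (p * y) n + y * lucasPow s t u v (q * x) (v * y) n := by
  unfold lucasPow
  rw [Finset.mul_sum, Finset.mul_sum]
  rw [Finset.sum_range_succ'
    (fun k => lucasBinom s t (n+1) k * u ^ ((n+1-k).choose 2) * v ^ (k.choose 2)
      * x ^ (n+1-k) * y ^ k) (n+1)]
  rw [Finset.sum_range_succ'
    (fun k => x * (lucasBinom s t n k * u ^ ((n-k).choose 2) * v ^ (k.choose 2)
      * (u*x) ^ (n-k) * (p*y) ^ k)) n]
  rw [Finset.sum_range_succ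
    (fun i => lucasBinom s t (n+1) (i+1) * u ^ ((n+1-(i+1)).choose 2) * v ^ ((i+1).choose 2)
      * x ^ (n+1-(i+1)) * y ^ (i+1)) n]
  rw [Finset.sum_range_succ
    (fun k => y * (lucasBinom s t n k * u ^ ((n-k).choose 2) * v ^ (k.choose 2)
      * (q*x) ^ (n-k) * (v*y) ^ k)) n]
  have hb0 : lucasBinom s t (n+1) 0 * u ^ ((n+1-0).choose 2) * v ^ ((0:ℕ).choose 2)
      * x ^ (n+1-0) * y ^ 0
      = x * (lucasBinom s t n 0 * u ^ ((n-0).choose 2) * v ^ ((0:ℕ).choose 2)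
      * (u*x) ^ (n-0) * (p*y) ^ 0) := by
    rw [lucasBinom_zero s t (n+1) (hF (n+1) le_rfl), lucasBinom_zero s t n (hF n (by omega))]
    simp only [Nat.sub_zero, choose_two_succ]
    ring
  have hbn : lucasBinom s t (n+1) (n+1) * u ^ ((n+1-(n+1)).choose 2) * v ^ ((n+1).choose 2)
      * x ^ (n+1-(n+1)) * y ^ (n+1)
      = y * (lucasBinom s t n n * u ^ ((n-n).choose 2) * v ^ (n.choose 2)
      * (q*x) ^ (n-n) * (v*y) ^ n) := by
    rw [lucasBinom_self s t (n+1) (hF (n+1) le_rfl), lucasBinom_self s t n (hF n (by omega))]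
    simp only [Nat.sub_self, choose_two_succ]
    ring
  have hmid : ∀ i ∈ Finset.range n,
      lucasBinom s t (n+1) (i+1) * u ^ ((n+1-(i+1)).choose 2) * v ^ ((i+1).choose 2)
        * x ^ (n+1-(i+1)) * y ^ (i+1)
      = x * (lucasBinom s t n (i+1) * u ^ ((n-(i+1)).choose 2) * v ^ ((i+1).choose 2)
        * (u*x) ^ (n-(i+1)) * (p*y) ^ (i+1))
      + y * (lucasBinom s t n i * u ^ ((n-i).choose 2) * v ^ (i.choose 2)
        * (q*x) ^ (n-i) * (v*y) ^ i) := by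
    intro i hi
    rw [Finset.mem_range] at hi
    obtain ⟨m, rfl⟩ : ∃ m, n = i + m + 1 := ⟨n - i - 1, by omega⟩
    have s1 : i + m + 1 + 1 - (i + 1) = m + 1 := by omega
    have s2 : i + m + 1 - (i + 1) = m := by omega
    have s3 : i + m + 1 - i = m + 1 := by omega
    rw [s1, s2, s3]
    rw [show i + m + 1 + 1 = i + m + 2 from rfl,
      lucasPascal s t p q h1 h2 i m (by intro k hk; exact hF k (by omega))]
    rw [choose_two_succ m, choose_two_succ i]
    ring
  rw [Finset.sum_congr rfl hmid, Finset.sum_add_distrib]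
  rw [hb0, hbn]
  ring

/-- Recursion for the deformed Lucasnomial power, where `φ = (s+d)/2` and `φ' = (s-d)/2`
with `d` a square root of `s²+4t`. -/
theorem lucasPow_succ (s t : ℂ) (hs : s ≠ 0) (ht : t ≠ 0)
    (d : ℂ) (hd : d ^ 2 = s ^ 2 + 4 * t) (x y u v : ℂ) (n : ℕ)
    (hL : ∀ m, 1 ≤ m → m ≤ n + 1 → lucasSeq s t m ≠ 0) :
    lucasPow s t u v x y (n + 1) =
      x * lucasPow s t u v (u * x) (((s + d) / 2) * y) n +
        y * lucasPow s t u v (((s - d) / 2) * x) (v * y) n ∧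
    lucasPow s t u v x y (n + 1) =
      x * lucasPow s t u v (u * x) (((s - d) / 2) * y) n +
        y * lucasPow s t u v (((s + d) / 2) * x) (v * y) n := by
  have hF : ∀ k, k ≤ n + 1 → lucasFact s t k ≠ 0 := by
    intro k hk
    exact lucasFact_ne_zero s t (n + 1) hL k hk
  constructor
  · exact lucasPow_succ_root s t ((s + d)/2) ((s - d)/2) (by ring)
      (by linear_combination (-1/4 : ℂ) * hd) x y u v n hF
  · exact lucasPow_succ_root s t ((s - d)/2) ((s + d)/2) (by ring)
      (by linear_combination (-1/4 : ℂ) * hd) x y u v n hF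
end
end

section
/- Lucas-derivative of deformed Lucasnomial powers: for all a, u, v ∈ ℂ, all n ≥ 1 with {m}_{s,t} ≠ 0 for 1 ≤ m ≤ n, and all x ≠ 0: (1) D_{s,t}[z ↦ (z ⊕_{u,v} a)^{(n)}](x) = {n}_{s,t}·(ux ⊕_{u,v} a)^{(n−1)}; (2) D_{s,t}[z ↦ (a ⊕_{u,v} z)^{(n)}](x) = {n}_{s,t}·(a ⊕_{u,v} vx)^{(n−1)}; (3) D_{s,t}[z ↦ (a ⊖_{u,v} z)^{(n)}](x) = −{n}_{s,t}·(a ⊖_{u,v} vx)^{(n−1)}. -/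
open scoped BigOperators

noncomputable section

private lemma lucasFact_succ' (s t : ℂ) (n : ℕ) :
    lucasFact s t (n + 1) = lucasFact s t n * lucasSeq s t (n + 1) := rfl

private lemma key_pow' (s t d : ℂ) (hd : d ^ 2 = s ^ 2 + 4 * t) :
    ∀ j : ℕ, ((s + d) / 2) ^ j - ((s - d) / 2) ^ j = lucasSeq s t j * d := by
  intro j
  induction j using Nat.twoStepInduction with
  | zero => simp [lucasSeq]
  | one => simp [lucasSeq]; ring
  | more n ih1 ih2 =>
    have hl : lucasSeq s t (n + 2) = s * lucasSeq s t (n + 1) + t * lucasSeq s t n := rfl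
    rw [hl]
    linear_combination s * ih2 + t * ih1 + ((((s + d) / 2) ^ n - ((s - d) / 2) ^ n) / 4) * hd

private lemma fact_ne' (s t : ℂ) (n : ℕ) (hL : ∀ m, 1 ≤ m → m ≤ n → lucasSeq s t m ≠ 0) :
    ∀ m, m ≤ n → lucasFact s t m ≠ 0 := by
  intro m
  induction m with
  | zero => intro _; norm_num [lucasFact]
  | succ k ih =>
    intro hm
    rw [lucasFact_succ']
    exact mul_ne_zero (ih (by omega)) (hL (k + 1) (by omega) hm)

private lemma binom_left' (s t : ℂ) (m k : ℕ) (hk : k ≤ m)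
    (h1 : lucasFact s t k ≠ 0) (h2 : lucasFact s t (m - k) ≠ 0)
    (h3 : lucasSeq s t (m - k + 1) ≠ 0) :
    lucasBinom s t (m + 1) k * lucasSeq s t (m - k + 1) =
      lucasSeq s t (m + 1) * lucasBinom s t m k := by
  have h : m + 1 - k = m - k + 1 := by omega
  simp only [lucasBinom, h, lucasFact_succ']
  field_simp

private lemma binom_right' (s t : ℂ) (m k : ℕ) (hk : k ≤ m)
    (h1 : lucasFact s t k ≠ 0) (h2 : lucasFact s t (m - k) ≠ 0)
    (h3 : lucasSeq s t (k + 1) ≠ 0) :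
    lucasBinom s t (m + 1) (k + 1) * lucasSeq s t (k + 1) =
      lucasSeq s t (m + 1) * lucasBinom s t m k := by
  have h : m + 1 - (k + 1) = m - k := by omega
  simp only [lucasBinom, h, lucasFact_succ']
  field_simp

private lemma choose_two_succ' (j : ℕ) : (j + 1).choose 2 = j.choose 2 + j := by
  simp [Nat.choose_succ_succ, Nat.add_comm]

private lemma main12' (s t : ℂ) (hst : s ^ 2 + 4 * t ≠ 0) (d : ℂ) (hd : d ^ 2 = s ^ 2 + 4 * t)
    (a u v : ℂ) (n : ℕ) (hn : 1 ≤ n)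
    (hL : ∀ m, 1 ≤ m → m ≤ n → lucasSeq s t m ≠ 0) (x : ℂ) (hx : x ≠ 0) :
    lucasDeriv ((s + d) / 2) ((s - d) / 2) (fun z => lucasPow s t u v z a n) x =
      lucasSeq s t n * lucasPow s t u v (u * x) a (n - 1) ∧
    lucasDeriv ((s + d) / 2) ((s - d) / 2) (fun z => lucasPow s t u v a z n) x =
      lucasSeq s t n * lucasPow s t u v a (v * x) (n - 1) := by
  have hd0 : d ≠ 0 := by intro h; apply hst; rw [← hd, h]; ring
  obtain ⟨m, rfl⟩ : ∃ m, n = m + 1 := ⟨n - 1, by omega⟩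
  have hF := fact_ne' s t (m + 1) hL
  have key := key_pow' s t d hd
  have hsub : m + 1 - 1 = m := rfl
  have hpq : (s + d) / 2 - (s - d) / 2 = d := by ring
  constructor
  · simp only [lucasDeriv, lucasPow, hpq, hsub]
    rw [div_eq_iff (mul_ne_zero hd0 hx), ← Finset.sum_sub_distrib, Finset.mul_sum,
      Finset.sum_mul, Finset.sum_range_succ]
    simp only [Nat.sub_self, pow_zero, mul_one, sub_self, add_zero]
    refine Finset.sum_congr rfl fun k hk => ?_
    have hk' : k ≤ m := by
      have := Finset.mem_range.mp hk; omega
    have hj : m + 1 - k = (m - k) + 1 := by omega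
    rw [hj, choose_two_succ']
    simp only [mul_pow]
    have hb := binom_left' s t m k hk' (hF k (by omega)) (hF (m - k) (by omega))
      (hL (m - k + 1) (by omega) (by omega))
    have hkey := key ((m - k) + 1)
    linear_combination (u ^ ((m - k).choose 2 + (m - k)) * v ^ (k.choose 2) * a ^ k *
        x ^ ((m - k) + 1) * lucasBinom s t (m + 1) k) * hkey +
      (u ^ ((m - k).choose 2 + (m - k)) * v ^ (k.choose 2) * a ^ k * x ^ ((m - k) + 1) * d) * hb
  · simp only [lucasDeriv, lucasPow, hpq, hsub]
    rw [div_eq_iff (mul_ne_zero hd0 hx), ← Finset.sum_sub_distrib, Finset.mul_sum,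
      Finset.sum_mul, Finset.sum_range_succ']
    simp only [pow_zero, mul_one, sub_self, add_zero]
    refine Finset.sum_congr rfl fun k hk => ?_
    have hk' : k ≤ m := by
      have := Finset.mem_range.mp hk; omega
    have hj : m + 1 - (k + 1) = m - k := by omega
    rw [hj, choose_two_succ']
    simp only [mul_pow]
    have hb := binom_right' s t m k hk' (hF k (by omega)) (hF (m - k) (by omega))
      (hL (k + 1) (by omega) (by omega))
    have hkey := key (k + 1)
    linear_combination (u ^ ((m - k).choose 2) * v ^ (k.choose 2 + k) * a ^ (m - k) *
        x ^ (k + 1) * lucasBinom s t (m + 1) (k + 1)) * hkey +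
      (u ^ ((m - k).choose 2) * v ^ (k.choose 2 + k) * a ^ (m - k) * x ^ (k + 1) * d) * hb

/-- Lucas-derivative of deformed Lucasnomial powers, where `φ = (s+d)/2`, `φ' = (s-d)/2`
with `d` a square root of `s²+4t ≠ 0`. -/
theorem lucasDeriv_lucasPow (s t : ℂ) (hs : s ≠ 0) (ht : t ≠ 0)
    (hst : s ^ 2 + 4 * t ≠ 0) (d : ℂ) (hd : d ^ 2 = s ^ 2 + 4 * t)
    (a u v : ℂ) (n : ℕ) (hn : 1 ≤ n)
    (hL : ∀ m, 1 ≤ m → m ≤ n → lucasSeq s t m ≠ 0) (x : ℂ) (hx : x ≠ 0) :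
    lucasDeriv ((s + d) / 2) ((s - d) / 2) (fun z => lucasPow s t u v z a n) x =
      lucasSeq s t n * lucasPow s t u v (u * x) a (n - 1) ∧
    lucasDeriv ((s + d) / 2) ((s - d) / 2) (fun z => lucasPow s t u v a z n) x =
      lucasSeq s t n * lucasPow s t u v a (v * x) (n - 1) ∧
    lucasDeriv ((s + d) / 2) ((s - d) / 2) (fun z => lucasPow s t u v a (-z) n) x =
      -(lucasSeq s t n * lucasPow s t u v a (-(v * x)) (n - 1)) := by
  obtain ⟨h1, h2⟩ := main12' s t hst d hd a u v n hn hL x hx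
  refine ⟨h1, h2, ?_⟩
  have h2' := (main12' s t hst d hd a u v n hn hL (-x) (neg_ne_zero.mpr hx)).2
  have hd0 : d ≠ 0 := by intro h; apply hst; rw [← hd, h]; ring
  have hpq : (s + d) / 2 - (s - d) / 2 = d := by ring
  have hflip : lucasDeriv ((s + d) / 2) ((s - d) / 2) (fun z => lucasPow s t u v a (-z) n) x
      = -(lucasDeriv ((s + d) / 2) ((s - d) / 2) (fun z => lucasPow s t u v a z n) (-x)) := by
    simp only [lucasDeriv, hpq, mul_neg, neg_neg]
    ring
  rw [hflip, h2', mul_neg]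
end
end

section
/- Sum and difference formulas for the Lucas-Pantograph sine and cosine: for x, y ∈ ℂ and nonzero u, v ∈ ℂ, assuming the series defining sin_{s,t}(x,u), cos_{s,t}(x,u), sin_{s,t}(y,v) and cos_{s,t}(y,v) converge absolutely: (1) sin_{s,t}(x ⊕_{u,v} y) = sin_{s,t}(x,u)·cos_{s,t}(y,v) + cos_{s,t}(x,u)·sin_{s,t}(y,v); (2) sin_{s,t}(x ⊖_{u,v} y) = sin_{s,t}(x,u)·cos_{s,t}(y,v) − cos_{s,t}(x,u)·sin_{s,t}(y,v); (3) cos_{s,t}(x ⊕_{u,v} y) = cos_{s,t}(x,u)·cos_{s,t}(y,v) − sin_{s,t}(x,u)·sin_{s,t}(y,v); (4) cos_{s,t}(x ⊖_{u,v} y) = cos_{s,t}(x,u)·cos_{s,t}(y,v) + sin_{s,t}(x,u)·sin_{s,t}(y,v), with all binomial series on the left converging. -/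
open scoped BigOperators

noncomputable section

/-- term -/
def LA (s t u x : ℂ) (n : ℕ) : ℂ := u ^ (n.choose 2) * x ^ n / lucasFact s t n

lemma lucasFact_ne (s t : ℂ) (hL : ∀ n : ℕ, 1 ≤ n → lucasSeq s t n ≠ 0) :
    ∀ n, lucasFact s t n ≠ 0
  | 0 => one_ne_zero
  | n + 1 => mul_ne_zero (lucasFact_ne s t hL n) (hL (n + 1) (by omega))

lemma lucasKey (s t u x w : ℂ) (hw2 : w ^ 2 = -1) (hw : ‖w‖ = 1)
    (hsx : Summable fun n : ℕ =>
      ‖(-1 : ℂ) ^ n * u ^ ((2 * n + 1).choose 2) * x ^ (2 * n + 1) / lucasFact s t (2 * n + 1)‖)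
    (hcx : Summable fun n : ℕ =>
      ‖(-1 : ℂ) ^ n * u ^ ((2 * n).choose 2) * x ^ (2 * n) / lucasFact s t (2 * n)‖) :
    HasSum (fun n => w ^ n * LA s t u x n) (lucasCos s t u x + w * lucasSin s t u x)
      ∧ Summable (fun n => ‖w ^ n * LA s t u x n‖) := by
  have hnorm : ∀ n, ‖w ^ n * LA s t u x n‖ = ‖LA s t u x n‖ := by
    intro n; rw [norm_mul, norm_pow, hw, one_pow, one_mul]
  have hce : ∀ m : ℕ, ‖(-1 : ℂ) ^ m * u ^ ((2 * m).choose 2) * x ^ (2 * m) / lucasFact s t (2 * m)‖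
      = ‖LA s t u x (2 * m)‖ := by
    intro m; simp [LA, norm_div, norm_mul, norm_pow]
  have hco : ∀ m : ℕ, ‖(-1 : ℂ) ^ m * u ^ ((2 * m + 1).choose 2) * x ^ (2 * m + 1) /
      lucasFact s t (2 * m + 1)‖ = ‖LA s t u x (2 * m + 1)‖ := by
    intro m; simp [LA, norm_div, norm_mul, norm_pow]
  have hsumm : Summable (fun n => ‖w ^ n * LA s t u x n‖) := by
    have he : Summable fun m : ℕ => ‖w ^ (2 * m) * LA s t u x (2 * m)‖ := by
      refine hcx.congr fun m => ?_
      rw [hnorm, ← hce]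
    have ho : Summable fun m : ℕ => ‖w ^ (2 * m + 1) * LA s t u x (2 * m + 1)‖ := by
      refine hsx.congr fun m => ?_
      rw [hnorm, ← hco]
    exact Summable.even_add_odd he ho
  refine ⟨?_, hsumm⟩
  have hwpow : ∀ m : ℕ, w ^ (2 * m) = (-1 : ℂ) ^ m := by
    intro m; rw [pow_mul, hw2]
  have he : HasSum (fun m : ℕ => w ^ (2 * m) * LA s t u x (2 * m)) (lucasCos s t u x) := by
    have := hcx.of_norm.hasSum
    rw [show (∑' n : ℕ, (-1 : ℂ) ^ n * u ^ ((2 * n).choose 2) * x ^ (2 * n) /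
        lucasFact s t (2 * n)) = lucasCos s t u x from rfl] at this
    refine this.congr_fun fun m => ?_
    rw [hwpow, LA]; ring
  have ho : HasSum (fun m : ℕ => w ^ (2 * m + 1) * LA s t u x (2 * m + 1))
      (w * lucasSin s t u x) := by
    have := (hsx.of_norm.hasSum).mul_left w
    rw [show (∑' n : ℕ, (-1 : ℂ) ^ n * u ^ ((2 * n + 1).choose 2) * x ^ (2 * n + 1) /
        lucasFact s t (2 * n + 1)) = lucasSin s t u x from rfl] at this
    refine this.congr_fun fun m => ?_
    rw [pow_succ, hwpow, LA]; ring
  exact HasSum.even_add_odd he ho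

lemma lucasProd (s t u v x y w : ℂ) (hL : ∀ n : ℕ, 1 ≤ n → lucasSeq s t n ≠ 0)
    (hw2 : w ^ 2 = -1) (hw : ‖w‖ = 1)
    (hsx : Summable fun n : ℕ =>
      ‖(-1 : ℂ) ^ n * u ^ ((2 * n + 1).choose 2) * x ^ (2 * n + 1) / lucasFact s t (2 * n + 1)‖)
    (hcx : Summable fun n : ℕ =>
      ‖(-1 : ℂ) ^ n * u ^ ((2 * n).choose 2) * x ^ (2 * n) / lucasFact s t (2 * n)‖)
    (hsy : Summable fun n : ℕ =>
      ‖(-1 : ℂ) ^ n * v ^ ((2 * n + 1).choose 2) * y ^ (2 * n + 1) / lucasFact s t (2 * n + 1)‖)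
    (hcy : Summable fun n : ℕ =>
      ‖(-1 : ℂ) ^ n * v ^ ((2 * n).choose 2) * y ^ (2 * n) / lucasFact s t (2 * n)‖) :
    HasSum (fun n => w ^ n * (lucasPow s t u v x y n / lucasFact s t n))
      ((lucasCos s t u x + w * lucasSin s t u x) * (lucasCos s t v y + w * lucasSin s t v y)) := by
  obtain ⟨hX, hXn⟩ := lucasKey s t u x w hw2 hw hsx hcx
  obtain ⟨hY, hYn⟩ := lucasKey s t v y w hw2 hw hsy hcy
  have hfact := lucasFact_ne s t hL
  have h := hasSum_sum_range_mul_of_summable_norm hXn hYn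
  rw [hX.tsum_eq, hY.tsum_eq] at h
  refine h.congr_fun fun n => ?_
  rw [← Finset.sum_range_reflect
    (fun k => (w ^ k * LA s t u x k) * (w ^ (n - k) * LA s t v y (n - k))) (n + 1)]
  rw [lucasPow, Finset.sum_div, Finset.mul_sum]
  refine Finset.sum_congr rfl fun k hk => ?_
  have hk' : k ≤ n := Nat.lt_succ_iff.mp (Finset.mem_range.mp hk)
  have h1 : n + 1 - 1 - k = n - k := by omega
  have h2 : n - (n - k) = k := by omega
  rw [h1, h2]
  have hpow : w ^ (n - k) * w ^ k = w ^ n := by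
    rw [← pow_add]; congr 1; omega
  rw [LA, LA, lucasBinom, ← hpow]
  simp only [div_eq_mul_inv, mul_inv]
  have hc : lucasFact s t n * (lucasFact s t n)⁻¹ = 1 := mul_inv_cancel₀ (hfact n)
  linear_combination (w ^ (n - k) * w ^ k * u ^ (n - k).choose 2 * v ^ k.choose 2 * x ^ (n - k) *
    y ^ k * (lucasFact s t k)⁻¹ * (lucasFact s t (n - k))⁻¹) * hc

lemma lucasMain (s t : ℂ) (hL : ∀ n : ℕ, 1 ≤ n → lucasSeq s t n ≠ 0) (x y u v : ℂ)
    (hsx : Summable fun n : ℕ =>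
      ‖(-1 : ℂ) ^ n * u ^ ((2 * n + 1).choose 2) * x ^ (2 * n + 1) / lucasFact s t (2 * n + 1)‖)
    (hcx : Summable fun n : ℕ =>
      ‖(-1 : ℂ) ^ n * u ^ ((2 * n).choose 2) * x ^ (2 * n) / lucasFact s t (2 * n)‖)
    (hsy : Summable fun n : ℕ =>
      ‖(-1 : ℂ) ^ n * v ^ ((2 * n + 1).choose 2) * y ^ (2 * n + 1) / lucasFact s t (2 * n + 1)‖)
    (hcy : Summable fun n : ℕ =>
      ‖(-1 : ℂ) ^ n * v ^ ((2 * n).choose 2) * y ^ (2 * n) / lucasFact s t (2 * n)‖) :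
    HasSum (fun n : ℕ =>
        (-1 : ℂ) ^ n * lucasPow s t u v x y (2 * n + 1) / lucasFact s t (2 * n + 1))
      (lucasSin s t u x * lucasCos s t v y + lucasCos s t u x * lucasSin s t v y) ∧
    HasSum (fun n : ℕ =>
        (-1 : ℂ) ^ n * lucasPow s t u v x y (2 * n) / lucasFact s t (2 * n))
      (lucasCos s t u x * lucasCos s t v y - lucasSin s t u x * lucasSin s t v y) := by
  set Cx := lucasCos s t u x with hCx
  set Sx := lucasSin s t u x with hSx
  set Cy := lucasCos s t v y with hCy
  set Sy := lucasSin s t v y with hSy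
  set Q : ℕ → ℂ := fun n => lucasPow s t u v x y n / lucasFact s t n with hQ
  have hI := lucasProd s t u v x y Complex.I hL Complex.I_sq (by simp) hsx hcx hsy hcy
  have hJ := lucasProd s t u v x y (-Complex.I) hL (by rw [neg_sq, Complex.I_sq]) (by simp)
    hsx hcx hsy hcy
  have hIne : (2 * Complex.I : ℂ) ≠ 0 := by simp [Complex.I_ne_zero]
  constructor
  · -- odd part
    have h1 := (hI.sub hJ).mul_left ((2 * Complex.I)⁻¹)
    set g : ℕ → ℂ := fun n =>
      (2 * Complex.I)⁻¹ * (Complex.I ^ n * Q n - (-Complex.I) ^ n * Q n) with hg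
    have hinj : Function.Injective (fun m : ℕ => 2 * m + 1) := fun a b h => by
      dsimp at h; omega
    have hvan : ∀ n ∉ Set.range (fun m : ℕ => 2 * m + 1), g n = 0 := by
      intro n hn
      simp only [Set.mem_range, not_exists] at hn
      obtain ⟨m, rfl⟩ : ∃ m, n = 2 * m := by
        have h2 := hn (n / 2); exact ⟨n / 2, by omega⟩
      simp [hg, pow_mul, neg_sq]
    have hcomp := (hinj.hasSum_iff hvan).mpr h1
    have hterm : ∀ m : ℕ, g (2 * m + 1) = (-1 : ℂ) ^ m * lucasPow s t u v x y (2 * m + 1) /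
        lucasFact s t (2 * m + 1) := by
      intro m
      have e1 : Complex.I ^ (2 * m + 1) = (-1 : ℂ) ^ m * Complex.I := by
        rw [pow_succ, pow_mul, Complex.I_sq]
      have e2 : (-Complex.I) ^ (2 * m + 1) = -((-1 : ℂ) ^ m * Complex.I) := by
        rw [Odd.neg_pow (⟨m, by ring⟩ : Odd (2 * m + 1)), e1]
      simp only [hg, hQ, e1, e2]
      field_simp
      ring
    have hval : (2 * Complex.I)⁻¹ * ((Cx + Complex.I * Sx) * (Cy + Complex.I * Sy) -
        (Cx + -Complex.I * Sx) * (Cy + -Complex.I * Sy)) = Sx * Cy + Cx * Sy := by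
      rw [inv_mul_eq_iff_eq_mul₀ hIne]; ring
    rw [hval] at hcomp
    exact hcomp.congr_fun fun m => (hterm m).symm
  · -- even part
    have h1 := (hI.add hJ).mul_left ((2 : ℂ)⁻¹)
    set g : ℕ → ℂ := fun n =>
      (2 : ℂ)⁻¹ * (Complex.I ^ n * Q n + (-Complex.I) ^ n * Q n) with hg
    have hinj : Function.Injective (fun m : ℕ => 2 * m) := fun a b h => by
      dsimp at h; omega
    have hvan : ∀ n ∉ Set.range (fun m : ℕ => 2 * m), g n = 0 := by
      intro n hn
      simp only [Set.mem_range, not_exists] at hn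
      obtain ⟨m, rfl⟩ : ∃ m, n = 2 * m + 1 := by
        have h2 := hn (n / 2); exact ⟨n / 2, by omega⟩
      have e2 : (-Complex.I) ^ (2 * m + 1) = -(Complex.I ^ (2 * m + 1)) :=
        Odd.neg_pow (⟨m, by ring⟩ : Odd (2 * m + 1)) Complex.I
      simp [hg, e2]
    have hcomp := (hinj.hasSum_iff hvan).mpr h1
    have hterm : ∀ m : ℕ, g (2 * m) = (-1 : ℂ) ^ m * lucasPow s t u v x y (2 * m) /
        lucasFact s t (2 * m) := by
      intro m
      have e1 : Complex.I ^ (2 * m) = (-1 : ℂ) ^ m := by rw [pow_mul, Complex.I_sq]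
      have e2 : (-Complex.I) ^ (2 * m) = (-1 : ℂ) ^ m := by
        rw [pow_mul, neg_sq, Complex.I_sq]
      simp only [hg, hQ, e1, e2]
      field_simp
      ring
    have hval : (2 : ℂ)⁻¹ * ((Cx + Complex.I * Sx) * (Cy + Complex.I * Sy) +
        (Cx + -Complex.I * Sx) * (Cy + -Complex.I * Sy)) = Cx * Cy - Sx * Sy := by
      have := Complex.I_sq
      rw [inv_mul_eq_iff_eq_mul₀ (by norm_num)]
      linear_combination (2 : ℂ) * Sx * Sy * this
    rw [hval] at hcomp
    exact hcomp.congr_fun fun m => (hterm m).symm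

/-- Sum and difference formulas for the Lucas-Pantograph sine and cosine. -/
theorem lucasSin_lucasCos_add_sub (s t : ℂ) (hs : s ≠ 0) (ht : t ≠ 0)
    (hL : ∀ n : ℕ, 1 ≤ n → lucasSeq s t n ≠ 0)
    (x y u v : ℂ) (hu : u ≠ 0) (hv : v ≠ 0)
    (hconvsx : Summable fun n : ℕ =>
      ‖(-1 : ℂ) ^ n * u ^ ((2 * n + 1).choose 2) * x ^ (2 * n + 1) / lucasFact s t (2 * n + 1)‖)
    (hconvcx : Summable fun n : ℕ =>
      ‖(-1 : ℂ) ^ n * u ^ ((2 * n).choose 2) * x ^ (2 * n) / lucasFact s t (2 * n)‖)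
    (hconvsy : Summable fun n : ℕ =>
      ‖(-1 : ℂ) ^ n * v ^ ((2 * n + 1).choose 2) * y ^ (2 * n + 1) / lucasFact s t (2 * n + 1)‖)
    (hconvcy : Summable fun n : ℕ =>
      ‖(-1 : ℂ) ^ n * v ^ ((2 * n).choose 2) * y ^ (2 * n) / lucasFact s t (2 * n)‖) :
    HasSum (fun n : ℕ =>
        (-1 : ℂ) ^ n * lucasPow s t u v x y (2 * n + 1) / lucasFact s t (2 * n + 1))
      (lucasSin s t u x * lucasCos s t v y + lucasCos s t u x * lucasSin s t v y) ∧
    HasSum (fun n : ℕ =>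
        (-1 : ℂ) ^ n * lucasPow s t u v x (-y) (2 * n + 1) / lucasFact s t (2 * n + 1))
      (lucasSin s t u x * lucasCos s t v y - lucasCos s t u x * lucasSin s t v y) ∧
    HasSum (fun n : ℕ =>
        (-1 : ℂ) ^ n * lucasPow s t u v x y (2 * n) / lucasFact s t (2 * n))
      (lucasCos s t u x * lucasCos s t v y - lucasSin s t u x * lucasSin s t v y) ∧
    HasSum (fun n : ℕ =>
        (-1 : ℂ) ^ n * lucasPow s t u v x (-y) (2 * n) / lucasFact s t (2 * n))
      (lucasCos s t u x * lucasCos s t v y + lucasSin s t u x * lucasSin s t v y) := by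
  have hsy' : Summable fun n : ℕ => ‖(-1 : ℂ) ^ n * v ^ ((2 * n + 1).choose 2) *
      (-y) ^ (2 * n + 1) / lucasFact s t (2 * n + 1)‖ := by
    refine hconvsy.congr fun n => ?_
    rw [Odd.neg_pow (⟨n, by ring⟩ : Odd (2 * n + 1)) y, mul_neg, neg_div, norm_neg]
  have hcy' : Summable fun n : ℕ => ‖(-1 : ℂ) ^ n * v ^ ((2 * n).choose 2) *
      (-y) ^ (2 * n) / lucasFact s t (2 * n)‖ := by
    refine hconvcy.congr fun n => ?_
    rw [Even.neg_pow (⟨n, by ring⟩ : Even (2 * n)) y]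
  have hSneg : lucasSin s t v (-y) = -lucasSin s t v y := by
    rw [lucasSin, lucasSin, ← tsum_neg]
    refine tsum_congr fun n => ?_
    rw [Odd.neg_pow (⟨n, by ring⟩ : Odd (2 * n + 1)) y]
    ring
  have hCneg : lucasCos s t v (-y) = lucasCos s t v y := by
    rw [lucasCos, lucasCos]
    refine tsum_congr fun n => ?_
    rw [Even.neg_pow (⟨n, by ring⟩ : Even (2 * n)) y]
  obtain ⟨h1, h3⟩ := lucasMain s t hL x y u v hconvsx hconvcx hconvsy hconvcy
  obtain ⟨h2, h4⟩ := lucasMain s t hL x (-y) u v hconvsx hconvcx hsy' hcy'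
  rw [hSneg, hCneg] at h2 h4
  rw [mul_neg, ← sub_eq_add_neg] at h2
  rw [mul_neg, sub_neg_eq_add] at h4
  exact ⟨h1, h2, h3, h4⟩
end
end
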